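/- arXiv:2304.00389 — 3 statements merged into one kernel-verified Lean document; each statement's English description precedes it below -/
import Mathlib

section
/- Let Σ be a finite set of finite sequences over a type of agents, let F be a finite set of agents, and let Σ \ F denote the subset of sequences in Σ containing no element of F. If Σ' ⊆ Σ \ F is a set of pairwise disjoint sequences (no element of one sequence occurs in another) with |Σ'| > f − |F|, and at most f agents in total are faulty (faulty agents form a set B with |B| ≤ f and F ⊆ B), then there exists a sequence σ ∈ Σ' all of whose elements are non-faulty (not in B). -/
/-- Pigeonhole for disjoint hope chains: if strictly more than f - |F|
pairwise-disjoint nonempty chains avoid F, F ⊆ B, |B| ≤ f, then some chain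
consists entirely of non-faulty agents. -/
theorem exists_correct_chain {A : Type} [DecidableEq A]
    (S : Finset (List A)) (B F : Finset A) (f : ℕ)
    (hFB : F ⊆ B) (hB : B.card ≤ f)
    (hne : ∀ σ ∈ S, σ ≠ [])
    (havoid : ∀ σ ∈ S, ∀ a ∈ σ, a ∉ F)
    (hdisj : ∀ σ ∈ S, ∀ σ' ∈ S, σ ≠ σ' → ∀ a ∈ σ, a ∉ σ')
    (hcard : S.card > f - F.card) :
    ∃ σ ∈ S, ∀ a ∈ σ, a ∉ B := by
  by_contra h
  push_neg at h
  choose g hg1 hg2 using h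
  obtain ⟨σ0, hσ0⟩ := Finset.card_pos.mp (by omega : 0 < S.card)
  haveI : Inhabited A := ⟨g σ0 hσ0⟩
  have hle : S.card ≤ (B \ F).card := by
    exact Finset.card_le_card_of_injOn (fun σ => if h : σ ∈ S then g σ h else default)
      (fun σ hσ => by
        have hσ : σ ∈ S := by simpa using hσ
        simp only [dif_pos hσ, Finset.mem_coe, Finset.mem_sdiff]
        exact ⟨hg2 σ hσ, havoid σ hσ _ (hg1 σ hσ)⟩)
      (fun σ hσ σ' hσ' heq => by
        simp only [Finset.mem_coe] at hσ hσ'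
        simp only [dif_pos hσ, dif_pos hσ'] at heq
        by_contra hne'
        exact hdisj σ hσ σ' hσ' hne' (g σ hσ) (hg1 σ hσ) (heq ▸ hg1 σ' hσ'))
  rw [Finset.card_sdiff_of_subset hFB] at hle
  omega
end

section
/- Let Σ be a set of pairwise disjoint finite sequences of agents with |Σ| ≥ k + f − |F|, such that no sequence in Σ contains an agent from F, where F is a subset of the faulty set B with |B| ≤ f. Then there exist at least k sequences in Σ consisting entirely of non-faulty agents, and hence (taking the last agent of each) there exists a set G of at least k distinct non-faulty agents, each being the last element of some sequence in Σ. -/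
/-- If at least k + f - |F| pairwise-disjoint nonempty chains avoid F ⊆ B,
|B| ≤ f, then there are at least k chains of entirely non-faulty agents and
a set G of at least k distinct non-faulty agents, each the last element of
some chain. -/
theorem exists_k_correct_chains {A : Type} [DecidableEq A]
    (S : Finset (List A)) (B F : Finset A) (f k : ℕ)
    (hk : 0 < k)
    (hFB : F ⊆ B) (hB : B.card ≤ f)
    (hne : ∀ σ ∈ S, σ ≠ [])
    (havoid : ∀ σ ∈ S, ∀ a ∈ σ, a ∉ F)
    (hdisj : ∀ σ ∈ S, ∀ σ' ∈ S, σ ≠ σ' → ∀ a ∈ σ, a ∉ σ')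
    (hcard : S.card ≥ k + f - F.card) :
    (∃ T ⊆ S, k ≤ T.card ∧ ∀ σ ∈ T, ∀ a ∈ σ, a ∉ B) ∧
    (∃ G : Finset A, k ≤ G.card ∧ (∀ a ∈ G, a ∉ B) ∧
      ∀ a ∈ G, ∃ σ ∈ S, σ.getLast? = some a ∧ ∀ b ∈ σ, b ∉ B) := by
  classical
  set T := S.filter (fun σ => ∀ a ∈ σ, a ∉ B) with hT
  have hTS : T ⊆ S := Finset.filter_subset _ _
  set Bad := S.filter (fun σ => ∃ a ∈ σ, a ∈ B) with hBad
  have hFf : F.card ≤ f := le_trans (Finset.card_le_card hFB) hB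
  have hBadcard : Bad.card ≤ f - F.card := by
    rcases Bad.eq_empty_or_nonempty with h0 | ⟨σ₀, hσ₀⟩
    · simp [h0]
    · have hle : Bad.card ≤ (B \ F).card := by
        apply Finset.card_le_card_of_injOn
          (fun σ => if h : ∃ a ∈ σ, a ∈ B then h.choose else
            (Finset.mem_filter.mp hσ₀).2.choose)
        · intro σ hσ
          have hσS := (Finset.mem_filter.mp hσ).1
          have hex := (Finset.mem_filter.mp hσ).2
          simp only [dif_pos hex]
          rcases hex.choose_spec with ⟨hmem, hBmem⟩
          exact Finset.mem_sdiff.mpr ⟨hBmem, havoid σ hσS _ hmem⟩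
        · intro σ hσ σ' hσ' heq
          by_contra hneq
          have hexσ := (Finset.mem_filter.mp (Finset.mem_coe.mp hσ)).2
          have hexσ' := (Finset.mem_filter.mp (Finset.mem_coe.mp hσ')).2
          simp only [dif_pos hexσ, dif_pos hexσ'] at heq
          have h1 := hexσ.choose_spec.1
          have h2 := hexσ'.choose_spec.1
          rw [heq] at h1
          exact hdisj σ' (Finset.mem_filter.mp (Finset.mem_coe.mp hσ')).1
            σ (Finset.mem_filter.mp (Finset.mem_coe.mp hσ)).1
            (fun h => hneq h.symm) _ h2 h1
      have : (B \ F).card = B.card - F.card := Finset.card_sdiff_of_subset hFB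
      omega
  have hunion : S ⊆ T ∪ Bad := by
    intro σ hσ
    by_cases h : ∀ a ∈ σ, a ∉ B
    · exact Finset.mem_union_left _ (Finset.mem_filter.mpr ⟨hσ, h⟩)
    · push_neg at h
      exact Finset.mem_union_right _ (Finset.mem_filter.mpr ⟨hσ, by
        obtain ⟨a, ha, hab⟩ := h; exact ⟨a, ha, hab⟩⟩)
  have hScard : S.card ≤ T.card + Bad.card :=
    le_trans (Finset.card_le_card hunion) (Finset.card_union_le _ _)
  have hkT : k ≤ T.card := by omega
  have hTgood : ∀ σ ∈ T, ∀ a ∈ σ, a ∉ B := by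
    intro σ hσ; exact (Finset.mem_filter.mp hσ).2
  refine ⟨⟨T, hTS, hkT, hTgood⟩, ?_⟩
  obtain ⟨σ₀, hσ₀T⟩ := Finset.card_pos.mp (lt_of_lt_of_le hk hkT)
  have hσ₀ne : σ₀ ≠ [] := hne σ₀ (hTS hσ₀T)
  have ha₀ : ∃ a : A, True := ⟨σ₀.getLast hσ₀ne, trivial⟩
  obtain ⟨a₀, -⟩ := ha₀
  refine ⟨T.image (fun σ => σ.getLast?.getD a₀), ?_, ?_, ?_⟩
  · rw [Finset.card_image_of_injOn]
    · exact hkT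
    · intro σ hσ σ' hσ' heq
      by_contra hneq
      have hσne : σ ≠ [] := hne σ (hTS (Finset.mem_coe.mp hσ))
      have hσ'ne : σ' ≠ [] := hne σ' (hTS (Finset.mem_coe.mp hσ'))
      simp only at heq
      rw [List.getLast?_eq_getLast hσne, List.getLast?_eq_getLast hσ'ne] at heq
      simp only [Option.getD_some] at heq
      have h1 : σ.getLast hσne ∈ σ := List.getLast_mem hσne
      rw [heq] at h1
      exact hdisj σ' (hTS (Finset.mem_coe.mp hσ')) σ (hTS (Finset.mem_coe.mp hσ))
        (fun h => hneq h.symm) _ (List.getLast_mem hσ'ne) h1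
  · intro a ha
    obtain ⟨σ, hσT, hσa⟩ := Finset.mem_image.mp ha
    have hσne : σ ≠ [] := hne σ (hTS hσT)
    rw [List.getLast?_eq_getLast hσne, Option.getD_some] at hσa
    rw [← hσa]
    exact hTgood σ hσT _ (List.getLast_mem hσne)
  · intro a ha
    obtain ⟨σ, hσT, hσa⟩ := Finset.mem_image.mp ha
    have hσne : σ ≠ [] := hne σ (hTS hσT)
    refine ⟨σ, hTS hσT, ?_, hTgood σ hσT⟩
    rw [List.getLast?_eq_getLast hσne, Option.getD_some] at hσa
    rw [List.getLast?_eq_getLast hσne, hσa]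
end

section
/- From duplicate-free suffices: for a finite agent type, if the truncation property of the previous statement holds and V σ for some chain σ all of whose members are correct, then there exists a duplicate-free chain σ' with V σ', all members of σ' correct, and σ' having the same last element as σ. -/
lemma exists_dup_split {A : Type} {l : List A} (h : ¬ l.Nodup) :
    ∃ s i p, l = s ++ i :: p ∧ i ∈ p := by
  induction l with
  | nil => exact absurd List.nodup_nil h
  | cons a t ih =>
    by_cases hat : a ∈ t
    · exact ⟨[], a, t, rfl, hat⟩
    · have ht : ¬ t.Nodup := fun hn => h (List.nodup_cons.mpr ⟨hat, hn⟩)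
      obtain ⟨s, i, p, heq, hip⟩ := ih ht
      exact ⟨a :: s, i, p, by simp [heq], hip⟩

/-- Duplicate-free chains suffice: if V σ for a chain of all-correct agents
and V is closed under the truncation rule, then there is a duplicate-free
valid chain of correct agents with the same last element. -/
theorem nodup_chain_suffices {A : Type} [DecidableEq A]
    (V : List A → Prop) (C : A → Prop)
    (htrunc : ∀ (σs : List A) (i : A) (σp : List A),
      V (σs ++ i :: σp) → σp ≠ [] → (∀ a ∈ σs ++ [i], C a) → V σp)
    (σ : List A) (hσ : V σ) (hne : σ ≠ []) (hcorr : ∀ a ∈ σ, C a) :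
    ∃ σ' : List A, σ' ≠ [] ∧ σ'.Nodup ∧ V σ' ∧ (∀ a ∈ σ', C a) ∧
      σ'.getLast? = σ.getLast? := by
  have main : ∀ n (σ : List A), σ.length ≤ n → V σ → σ ≠ [] → (∀ a ∈ σ, C a) →
      ∃ σ' : List A, σ' ≠ [] ∧ σ'.Nodup ∧ V σ' ∧ (∀ a ∈ σ', C a) ∧
        σ'.getLast? = σ.getLast? := by
    intro n
    induction n with
    | zero =>
      intro σ hlen hV hne _
      cases σ with
      | nil => exact absurd rfl hne
      | cons a t => simp at hlen
    | succ n ih =>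
      intro σ hlen hV hne hcorr
      by_cases hnd : σ.Nodup
      · exact ⟨σ, hne, hnd, hV, hcorr, rfl⟩
      · obtain ⟨s, i, p, heq, hip⟩ := exists_dup_split hnd
        have hp : p ≠ [] := by rintro rfl; simp at hip
        have hVp : V p := htrunc s i p (heq ▸ hV) hp
          (fun a ha => hcorr a (by subst heq; simp at ha ⊢; tauto))
        have hcorrp : ∀ a ∈ p, C a := fun a ha =>
          hcorr a (by subst heq; simp [ha])
        have hlenp : p.length ≤ n := by subst heq; simp at hlen; omega
        have hlast : p.getLast? = σ.getLast? := by
          subst heq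
          cases p with
          | nil => exact absurd rfl hp
          | cons b t =>
            rw [List.getLast?_append_cons]
            simp [List.getLast?]
        obtain ⟨σ', h1, h2, h3, h4, h5⟩ := ih p hlenp hVp hp hcorrp
        exact ⟨σ', h1, h2, h3, h4, h5.trans hlast⟩
  exact main σ.length σ le_rfl hσ hne hcorr
end
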